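/- For x > 0, coth(x) < 1/x + x/3. -/

import Mathlib

lemma sinh_lt_mul_cosh (x : ℝ) (hx : 0 < x) : Real.sinh x < x * Real.cosh x := by
  have h : StrictMonoOn (fun y => y * Real.cosh y - Real.sinh y) (Set.Ici 0) := by
    apply strictMonoOn_of_deriv_pos (convex_Ici 0)
    · exact Continuous.continuousOn (by continuity)
    · intro y hy
      rw [interior_Ici] at hy
      have h1 : HasDerivAt (fun y => y * Real.cosh y - Real.sinh y)
          (1 * Real.cosh y + y * Real.sinh y - Real.cosh y) y :=
        ((hasDerivAt_id y).mul (Real.hasDerivAt_cosh y)).sub (Real.hasDerivAt_sinh y)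
      rw [h1.deriv]
      nlinarith [mul_pos hy (Real.sinh_pos_iff.mpr hy)]
  have h0 := h (Set.self_mem_Ici) (Set.mem_Ici.mpr hx.le) hx
  simp at h0
  linarith

lemma key_ineq (x : ℝ) (hx : 0 < x) :
    3 * x * Real.cosh x < (3 + x ^ 2) * Real.sinh x := by
  have h : StrictMonoOn (fun y => (3 + y ^ 2) * Real.sinh y - 3 * y * Real.cosh y)
      (Set.Ici 0) := by
    apply strictMonoOn_of_deriv_pos (convex_Ici 0)
    · exact Continuous.continuousOn (by continuity)
    · intro y hy
      rw [interior_Ici] at hy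
      have h1 : HasDerivAt (fun y => (3 + y ^ 2) * Real.sinh y - 3 * y * Real.cosh y)
          (((0 : ℝ) + 2 * y ^ 1) * Real.sinh y + (3 + y ^ 2) * Real.cosh y -
            ((0 * y + 3 * 1) * Real.cosh y + (3 * y) * Real.sinh y)) y := by
        have := (((hasDerivAt_const y (3:ℝ)).add ((hasDerivAt_pow 2 y))).mul
          (Real.hasDerivAt_sinh y)).sub
          (((hasDerivAt_const y (3:ℝ)).mul (hasDerivAt_id y)).mul (Real.hasDerivAt_cosh y))
        convert this using 1
        · rfl
        · rfl
        · funext z; simp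
        · norm_num
      rw [h1.deriv]
      have h2 := sinh_lt_mul_cosh y hy
      nlinarith [mul_pos hy (sub_pos.mpr h2)]
  have h0 := h (Set.self_mem_Ici) (Set.mem_Ici.mpr hx.le) hx
  simp at h0
  linarith

/-- For `x > 0`, `coth x < 1/x + x/3`. -/
theorem coth_lt_one_div_add_third (x : ℝ) (hx : 0 < x) :
    Real.cosh x / Real.sinh x < 1 / x + x / 3 := by
  have hs : 0 < Real.sinh x := Real.sinh_pos_iff.mpr hx
  have key := key_ineq x hx
  have h1 : Real.cosh x / Real.sinh x < (3 + x ^ 2) / (3 * x) := by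
    rw [div_lt_div_iff₀ hs (by positivity)]
    nlinarith
  have h2 : (3 + x ^ 2) / (3 * x) = 1 / x + x / 3 := by
    field_simp
  linarith [h2 ▸ h1]
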